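/- Let H be a Hopf algebra, X a subalgebra, and R a right ideal of X with ε(R) = {0}. Set p : X → X/span(R ∪ {1}) the canonical projection, define a·db := a b_{(1)} ⊗ p(b_{(2)}) ∈ H ⊗ (X/span(R ∪ {1})), Γ := span{a·db | a,b ∈ X}, with right module structure determined by (db)·c := d(bc) − b·dc. Then (Γ, d) with d b := 1·db is a well-defined covariant first order differential calculus on X. -/

import Mathlib

set_option maxHeartbeats 1000000
set_option synthInstance.maxHeartbeats 400000

open TensorProduct MulOpposite

namespace Stmt7Aux

variable {H : Type} [Ring H] [HopfAlgebra ℂ H] {X : Subalgebra ℂ H}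

lemma inj_lt (M : Type) [AddCommGroup M] [Module ℂ M] :
    Function.Injective (X.val.toLinearMap.lTensor M) :=
  Module.Flat.lTensor_preserves_injective_linearMap _ Subtype.val_injective

lemma map_id_val_eq (w : H ⊗[ℂ] X) :
    (TensorProduct.map (LinearMap.id) X.val.toLinearMap : H ⊗[ℂ] X →ₗ[ℂ] H ⊗[ℂ] H) w
    = (Algebra.TensorProduct.map (AlgHom.id ℂ H) X.val) w := by
  have : (TensorProduct.map (LinearMap.id) X.val.toLinearMap : H ⊗[ℂ] X →ₗ[ℂ] H ⊗[ℂ] H)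
      = (Algebra.TensorProduct.map (AlgHom.id ℂ H) X.val).toLinearMap := by
    ext h x; rfl
  rw [this]; rfl

variable (comulX : X →ₗ[ℂ] H ⊗[ℂ] X)
  (hcomulX : ∀ a : X,
      (TensorProduct.map (LinearMap.id) X.val.toLinearMap) (comulX a)
        = Coalgebra.comul (R := ℂ) (a : H))

include hcomulX in
lemma comulX_mul (b c : X) : comulX (b * c) = comulX b * comulX c := by
  apply inj_lt (X := X) H
  show (TensorProduct.map (LinearMap.id) X.val.toLinearMap) _
      = (TensorProduct.map (LinearMap.id) X.val.toLinearMap) _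
  rw [hcomulX, map_id_val_eq, map_mul, ← map_id_val_eq, ← map_id_val_eq, hcomulX, hcomulX]
  push_cast
  simp [Bialgebra.comul_mul]

include hcomulX in
lemma lTensor_val_comulX :
    X.val.toLinearMap.lTensor H ∘ₗ comulX
      = (Coalgebra.comul (R := ℂ)) ∘ₗ X.val.toLinearMap := by
  ext a
  exact hcomulX a

include hcomulX in
lemma comulX_coassoc (b : X) :
    (TensorProduct.assoc ℂ H H X).symm ((comulX.lTensor H) (comulX b))
      = (Coalgebra.comul (R := ℂ) (A := H)).rTensor X (comulX b) := by
  apply inj_lt (X := X) (H ⊗[ℂ] H)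
  have nat1 : (X.val.toLinearMap.lTensor (H ⊗[ℂ] H)) ∘ₗ
        (TensorProduct.assoc ℂ H H X).symm.toLinearMap
      = (TensorProduct.assoc ℂ H H H).symm.toLinearMap ∘ₗ
        ((X.val.toLinearMap.lTensor H).lTensor H) := by
    ext h h' x; rfl
  have nat2 : (X.val.toLinearMap.lTensor (H ⊗[ℂ] H)) ∘ₗ
        ((Coalgebra.comul (R := ℂ) (A := H)).rTensor X)
      = ((Coalgebra.comul (R := ℂ) (A := H)).rTensor H) ∘ₗ (X.val.toLinearMap.lTensor H) := by
    ext h x; rfl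
  have h1 := LinearMap.congr_fun nat1 ((comulX.lTensor H) (comulX b))
  have h2 := LinearMap.congr_fun nat2 (comulX b)
  simp only [LinearMap.comp_apply, LinearEquiv.coe_coe] at h1 h2
  rw [h1, h2]
  rw [← LinearMap.comp_apply, ← LinearMap.lTensor_comp, lTensor_val_comulX comulX hcomulX,
    LinearMap.lTensor_comp, LinearMap.comp_apply]
  have h3 : (X.val.toLinearMap.lTensor H) (comulX b) = Coalgebra.comul (R := ℂ) (b : H) :=
    hcomulX b
  rw [h3]
  rw [Coalgebra.coassoc_symm_apply]

variable (X) in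
/-- the "counit contraction" `h ⊗ x ↦ ε(x) • h`. -/
noncomputable def ctr : H ⊗[ℂ] X →ₗ[ℂ] H :=
  (TensorProduct.rid ℂ H).toLinearMap ∘ₗ
    ((Coalgebra.counit (R := ℂ) (A := H)).lTensor H) ∘ₗ (X.val.toLinearMap.lTensor H)

lemma ctr_tmul (h : H) (x : X) : ctr X (h ⊗ₜ[ℂ] x) = Coalgebra.counit (R := ℂ) (x : H) • h := by
  simp [ctr]

include hcomulX in
lemma ctr_comulX (b : X) : ctr X (comulX b) = (b : H) := by
  have h3 : (X.val.toLinearMap.lTensor H) (comulX b) = Coalgebra.comul (R := ℂ) (b : H) :=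
    hcomulX b
  simp only [ctr, LinearMap.comp_apply, h3]
  simp

variable (N : Submodule ℂ X)

/-- `G c x = (id ⊗ p)((1 ⊗ x) * Δ' c) - ε(x) • (id ⊗ p)(Δ' c)` -/
noncomputable def G (c : X) : X →ₗ[ℂ] H ⊗[ℂ] (X ⧸ N) :=
  ((TensorProduct.map LinearMap.id N.mkQ) ∘ₗ (LinearMap.mulRight ℂ (comulX c)) ∘ₗ
    ((TensorProduct.mk ℂ H X) 1))
  - (((Coalgebra.counit (R := ℂ) (A := H)) ∘ₗ X.val.toLinearMap).smulRight
      ((TensorProduct.map LinearMap.id N.mkQ) (comulX c)))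

lemma G_apply (c x : X) :
    G comulX N c x
      = (TensorProduct.map LinearMap.id N.mkQ) ((1 ⊗ₜ[ℂ] x) * comulX c)
        - Coalgebra.counit (R := ℂ) (x : H) • (TensorProduct.map LinearMap.id N.mkQ) (comulX c) :=
  rfl

lemma map_mkQ_one_tmul_mul {ρ : X} (hρx : ∀ x : X, ρ * x ∈ N) (w : H ⊗[ℂ] X) :
    (TensorProduct.map LinearMap.id N.mkQ : H ⊗[ℂ] X →ₗ[ℂ] H ⊗[ℂ] (X ⧸ N))
      ((1 ⊗ₜ[ℂ] ρ) * w) = 0 := by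
  induction w using TensorProduct.induction_on with
  | zero => simp
  | tmul h x =>
      rw [Algebra.TensorProduct.tmul_mul_tmul, one_mul]
      simp [(Submodule.Quotient.mk_eq_zero N).2 (hρx x)]
  | add u v hu hv => rw [mul_add, map_add, hu, hv, add_zero]

lemma N_le_ker_G {R : Submodule ℂ X}
    (hRideal : ∀ ρ ∈ R, ∀ x : X, ρ * x ∈ R)
    (hεR : ∀ ρ ∈ R, Coalgebra.counit (R := ℂ) ((ρ : H)) = 0)
    (hN : N = R ⊔ Submodule.span ℂ {1}) (c : X) :
    N ≤ LinearMap.ker (G comulX N c) := by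
  subst hN
  apply sup_le
  · intro ρ hρ
    rw [LinearMap.mem_ker]
    rw [G_apply]
    rw [hεR ρ hρ]
    rw [zero_smul, sub_zero]
    refine map_mkQ_one_tmul_mul _ ?_ (comulX c)
    intro x
    exact le_sup_left (α := Submodule ℂ X) (hRideal ρ hρ x)
  · rw [Submodule.span_le, Set.singleton_subset_iff]
    rw [SetLike.mem_coe, LinearMap.mem_ker, G_apply]
    rw [← Algebra.TensorProduct.one_def, one_mul]
    rw [OneMemClass.coe_one, Bialgebra.counit_one, one_smul, sub_self]

variable {N} in
/-- `F (h ⊗ q) = h • Gbar q`. -/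
noncomputable def F (Gbar : X ⧸ N →ₗ[ℂ] H ⊗[ℂ] (X ⧸ N)) :
    H ⊗[ℂ] (X ⧸ N) →ₗ[ℂ] H ⊗[ℂ] (X ⧸ N) :=
  TensorProduct.lift (LinearMap.mk₂ ℂ (fun h q => h • Gbar q)
    (fun h₁ h₂ q => add_smul h₁ h₂ (Gbar q))
    (fun c h q => smul_assoc c h (Gbar q))
    (fun h q₁ q₂ => by show h • Gbar (q₁ + q₂) = h • Gbar q₁ + h • Gbar q₂; rw [map_add, smul_add])
    (fun c h q => by show h • Gbar (c • q) = c • (h • Gbar q); rw [map_smul, smul_comm]))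

variable {N} in
lemma F_tmul (Gbar : X ⧸ N →ₗ[ℂ] H ⊗[ℂ] (X ⧸ N)) (h : H) (q : X ⧸ N) :
    F Gbar (h ⊗ₜ[ℂ] q) = h • Gbar q := rfl

variable {N} in
lemma F_smul (Gbar : X ⧸ N →ₗ[ℂ] H ⊗[ℂ] (X ⧸ N)) (h : H) (v : H ⊗[ℂ] (X ⧸ N)) :
    F Gbar (h • v) = h • F Gbar v := by
  induction v using TensorProduct.induction_on with
  | zero => simp
  | tmul h' q =>
      rw [TensorProduct.smul_tmul', smul_eq_mul, F_tmul, F_tmul, mul_smul]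
  | add u v hu hv => rw [smul_add, map_add, hu, hv, map_add, smul_add]

lemma smul_map_mkQ (h : H) (x : X) (w : H ⊗[ℂ] X) :
    h • ((TensorProduct.map LinearMap.id N.mkQ) ((1 ⊗ₜ[ℂ] x) * w))
      = (TensorProduct.map LinearMap.id N.mkQ) ((h ⊗ₜ[ℂ] x) * w) := by
  induction w using TensorProduct.induction_on with
  | zero => simp
  | tmul h' x' =>
      rw [Algebra.TensorProduct.tmul_mul_tmul, Algebra.TensorProduct.tmul_mul_tmul, one_mul]
      rw [TensorProduct.map_tmul, TensorProduct.map_tmul, TensorProduct.smul_tmul', smul_eq_mul]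
      rfl
  | add u v hu hv => rw [mul_add, mul_add, map_add, map_add, smul_add, hu, hv]

lemma F_map_mkQ (c : X) (hker : N ≤ LinearMap.ker (G comulX N c)) (w : H ⊗[ℂ] X) :
    F (N.liftQ (G comulX N c) hker) ((TensorProduct.map LinearMap.id N.mkQ) w)
      = (TensorProduct.map LinearMap.id N.mkQ) (w * comulX c)
        - (ctr X w) • ((TensorProduct.map LinearMap.id N.mkQ) (comulX c)) := by
  induction w using TensorProduct.induction_on with
  | zero => simp
  | tmul h x =>
      rw [TensorProduct.map_tmul, F_tmul]
      have : (N.liftQ (G comulX N c) hker) (N.mkQ x) = G comulX N c x := rfl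
      show h • (N.liftQ (G comulX N c) hker) (N.mkQ x) = _
      rw [this, G_apply, smul_sub, smul_map_mkQ, ctr_tmul, smul_comm,
        smul_assoc]
  | add u v hu hv =>
      rw [map_add, map_add, hu, hv, add_mul, map_add, map_add, add_smul]
      abel

include hcomulX in
lemma F_D (c : X) (hker : N ≤ LinearMap.ker (G comulX N c))
    (D : X →ₗ[ℂ] H ⊗[ℂ] (X ⧸ N))
    (hD : ∀ b : X, D b = (TensorProduct.map (LinearMap.id : H →ₗ[ℂ] H) N.mkQ) (comulX b))
    (b : X) :
    F (N.liftQ (G comulX N c) hker) (D b) = D (b * c) - ((b : H)) • D c := by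
  rw [hD b, F_map_mkQ, ← comulX_mul comulX hcomulX, ← hD, ← hD, ctr_comulX comulX hcomulX]


variable (X) in
/-- covariance: `h ⊗ q ↦ assoc (Δ h ⊗ q)`. -/
noncomputable def Psi (N : Submodule ℂ X) :
    H ⊗[ℂ] (X ⧸ N) →ₗ[ℂ] H ⊗[ℂ] (H ⊗[ℂ] (X ⧸ N)) :=
  (TensorProduct.assoc ℂ H H (X ⧸ N)).toLinearMap ∘ₗ
    ((Coalgebra.comul (R := ℂ) (A := H)).rTensor (X ⧸ N))

variable (X) in
noncomputable def P (N : Submodule ℂ X) (A : H ⊗[ℂ] H) :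
    (H ⊗[ℂ] H) ⊗[ℂ] X →ₗ[ℂ] H ⊗[ℂ] (H ⊗[ℂ] (X ⧸ N)) :=
  (TensorProduct.assoc ℂ H H (X ⧸ N)).toLinearMap ∘ₗ
    (TensorProduct.map (LinearMap.mulLeft ℂ A) N.mkQ)

lemma P_rTensor_comul (a : X) (w : H ⊗[ℂ] X) :
    P X N (Coalgebra.comul (R := ℂ) ((a : H)))
        ((Coalgebra.comul (R := ℂ) (A := H)).rTensor X w)
      = Psi X N ((a : H) • (TensorProduct.map LinearMap.id N.mkQ) w) := by
  induction w using TensorProduct.induction_on with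
  | zero => simp only [map_zero, smul_zero]
  | tmul h x =>
      rw [LinearMap.rTensor_tmul, TensorProduct.map_tmul, TensorProduct.smul_tmul',
        smul_eq_mul]
      show (TensorProduct.assoc ℂ H H (X ⧸ N))
          ((TensorProduct.map (LinearMap.mulLeft ℂ _) N.mkQ)
            (Coalgebra.comul (R := ℂ) h ⊗ₜ[ℂ] x))
        = (TensorProduct.assoc ℂ H H (X ⧸ N))
            ((Coalgebra.comul (R := ℂ) (A := H)).rTensor (X ⧸ N)
              (((a : H) * h) ⊗ₜ[ℂ] (N.mkQ x)))
      rw [TensorProduct.map_tmul, LinearMap.mulLeft_apply, LinearMap.rTensor_tmul,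
        Bialgebra.comul_mul]
  | add u v hu hv =>
      rw [map_add, map_add, hu, hv, map_add, smul_add, map_add]

lemma P_assoc_symm {ι : Type} [Fintype ι] (a1 : ι → H) (a2 : ι → X)
    {A : H ⊗[ℂ] H} (hA : A = ∑ t, a1 t ⊗ₜ[ℂ] ((a2 t : H)))
    (h : H) (w : H ⊗[ℂ] X) :
    P X N A ((TensorProduct.assoc ℂ H H X).symm (h ⊗ₜ[ℂ] w))
      = ∑ t, (a1 t * h) ⊗ₜ[ℂ] ((a2 t : H) • (TensorProduct.map LinearMap.id N.mkQ) w) := by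
  induction w using TensorProduct.induction_on with
  | zero =>
      simp only [TensorProduct.tmul_zero, map_zero, smul_zero]
      simp
  | tmul h' x =>
      rw [TensorProduct.assoc_symm_tmul]
      show (TensorProduct.assoc ℂ H H (X ⧸ N))
          ((TensorProduct.map (LinearMap.mulLeft ℂ A) N.mkQ) ((h ⊗ₜ[ℂ] h') ⊗ₜ[ℂ] x)) = _
      rw [TensorProduct.map_tmul, LinearMap.mulLeft_apply, hA, Finset.sum_mul]
      rw [TensorProduct.sum_tmul, map_sum]
      refine Finset.sum_congr rfl fun t _ => ?_
      rw [Algebra.TensorProduct.tmul_mul_tmul, TensorProduct.assoc_tmul,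
        TensorProduct.map_tmul, TensorProduct.smul_tmul', smul_eq_mul]
      rfl
  | add u v hu hv =>
      rw [TensorProduct.tmul_add, map_add, map_add, hu, hv, map_add, ← Finset.sum_add_distrib]
      refine Finset.sum_congr rfl fun t _ => ?_
      rw [smul_add, TensorProduct.tmul_add]

end Stmt7Aux

/-- any right ideal `R` of a left coideal subalgebra `X ⊆ H` with
`ε(R) = 0` gives rise to a covariant first order differential calculus on `X` via
`a db := a b₍₁₎ ⊗ p(b₍₂₎)`, `p : X → X/span(R ∪ {1})`, with right module structure
determined by the Leibniz rule.  Well-definedness of the right action and of the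
covariance map are the assertions below. -/
theorem stmt7
    {H : Type} [Ring H] [HopfAlgebra ℂ H] (X : Subalgebra ℂ H)
    (comulX : X →ₗ[ℂ] H ⊗[ℂ] X)
    (hcomulX : ∀ a : X,
      (TensorProduct.map (LinearMap.id) X.val.toLinearMap) (comulX a)
        = Coalgebra.comul (R := ℂ) (a : H))
    -- R: a right ideal of X annihilated by the counit
    (R : Submodule ℂ X)
    (hRideal : ∀ ρ ∈ R, ∀ x : X, ρ * x ∈ R)
    (hεR : ∀ ρ ∈ R, Coalgebra.counit (R := ℂ) ((ρ : H)) = 0)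
    -- N = span(R ∪ {1}) and p the canonical projection; D b = b₍₁₎ ⊗ p(b₍₂₎)
    (N : Submodule ℂ X) (hN : N = R ⊔ Submodule.span ℂ {1})
    (D : X →ₗ[ℂ] H ⊗[ℂ] (X ⧸ N))
    (hD : ∀ b : X, D b = (TensorProduct.map (LinearMap.id : H →ₗ[ℂ] H) N.mkQ) (comulX b)) :
    -- (1) the right module structure `(db)·c := d(bc) − b·dc` is well-defined on
    --     Γ = span{a·db}
    (∀ (c : X) (n : ℕ) (a b : Fin n → X),
      (∑ k, ((a k : H)) • D (b k)) = 0 →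
      ∑ k, (((a k : H)) • D (b k * c) - ((((a k) * (b k) : X) : H)) • D c) = 0) ∧
    -- (2) the covariance map `a·db ↦ a₍₁₎b₍₁₎ ⊗ a₍₂₎·d b₍₂₎` is well-defined
    (∀ (n : ℕ) (a b : Fin n → X),
      (∑ k, ((a k : H)) • D (b k)) = 0 →
      ∀ (ι κ : Type) (_ : Fintype ι) (_ : Fintype κ)
        (a1 : Fin n → ι → H) (a2 : Fin n → ι → X)
        (b1 : Fin n → κ → H) (b2 : Fin n → κ → X),
        (∀ k, comulX (a k) = ∑ t, a1 k t ⊗ₜ[ℂ] a2 k t) →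
        (∀ k, comulX (b k) = ∑ s, b1 k s ⊗ₜ[ℂ] b2 k s) →
        ∑ k, ∑ t, ∑ s, (a1 k t * b1 k s) ⊗ₜ[ℂ] (((a2 k t : H)) • D (b2 k s))
          = (0 : H ⊗[ℂ] (H ⊗[ℂ] (X ⧸ N)))) := by
  constructor
  · -- part (1)
    intro c n a b hsum
    have hker := Stmt7Aux.N_le_ker_G comulX N hRideal hεR hN c
    have key : ∀ k, ((a k : H)) • D (b k * c) - ((((a k) * (b k) : X) : H)) • D c
        = Stmt7Aux.F (N.liftQ (Stmt7Aux.G comulX N c) hker) (((a k : H)) • D (b k)) := by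
      intro k
      rw [Stmt7Aux.F_smul, Stmt7Aux.F_D comulX hcomulX N c hker D hD, smul_sub,
        MulMemClass.coe_mul, mul_smul]
    simp_rw [key]
    rw [← map_sum, hsum, map_zero]
  · -- part (2)
    intro n a b hsum ι κ _ _ a1 a2 b1 b2 ha hb
    have h0 := congrArg (Stmt7Aux.Psi X N) hsum
    rw [map_zero, map_sum] at h0
    have key : ∀ k, (∑ t, ∑ s, (a1 k t * b1 k s) ⊗ₜ[ℂ] (((a2 k t : H)) • D (b2 k s)))
        = Stmt7Aux.Psi X N (((a k : H)) • D (b k)) := by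
      intro k
      have hA : Coalgebra.comul (R := ℂ) ((a k : H))
          = ∑ t, a1 k t ⊗ₜ[ℂ] ((a2 k t : H)) := by
        rw [← hcomulX (a k), ha k, map_sum]
        exact Finset.sum_congr rfl fun t _ => rfl
      rw [Finset.sum_comm]
      have step1 : ∀ s, (∑ t, (a1 k t * b1 k s) ⊗ₜ[ℂ] (((a2 k t : H)) • D (b2 k s)))
          = Stmt7Aux.P X N (Coalgebra.comul (R := ℂ) ((a k : H)))
              ((TensorProduct.assoc ℂ H H X).symm (b1 k s ⊗ₜ[ℂ] comulX (b2 k s))) := by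
        intro s
        rw [Stmt7Aux.P_assoc_symm N (a1 k) (a2 k) hA (b1 k s) (comulX (b2 k s))]
        simp_rw [← hD]
      simp_rw [step1]
      rw [← map_sum, ← map_sum]
      have step2 : (∑ s, b1 k s ⊗ₜ[ℂ] comulX (b2 k s))
          = (comulX.lTensor H) (comulX (b k)) := by
        rw [hb k, map_sum]
        rfl
      rw [step2, Stmt7Aux.comulX_coassoc comulX hcomulX (b k),
        Stmt7Aux.P_rTensor_comul N (a k) (comulX (b k)), ← hD]
    simp_rw [key]
    exact h0
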